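/- Let f : [0,1] → [0,1] be a topologically mixing continuous map. Then there exist a fixed point a ∈ (0,1) and a bi-infinite sequence of intervals (U_i)_{i∈ℤ} such that: (1) U_i ⊆ U_{i+1} = f(U_i) for all i; (2) ⋂_{i∈ℤ} U_i = {a}; (3) for any nonempty open V there exists n with f^n(V) ⊇ U_0; and (4) ⋃_{i∈ℤ} U_i ⊇ (0,1). -/

import Mathlib

open Set Function

open Filter Topology

/-- Topological mixing of `f` on `[0,1]` (relative topology). -/
def MixingOnI (f : ℝ → ℝ) : Prop :=
  ∀ U V : Set ℝ, IsOpen U → IsOpen V → (U ∩ Icc 0 1).Nonempty →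
    (V ∩ Icc 0 1).Nonempty → ∃ N : ℕ, ∀ n ≥ N, (f^[n] '' (U ∩ Icc 0 1) ∩ V).Nonempty

section AuxMix

variable {f : ℝ → ℝ} (hf : ContinuousOn f (Icc 0 1)) (hmaps : MapsTo f (Icc 0 1) (Icc 0 1))

set_option linter.unusedSectionVars false

include hf hmaps in
lemma contIter (n : ℕ) : ContinuousOn (f^[n]) (Icc 0 1) := by
  induction n with
  | zero => simpa using continuousOn_id
  | succ n ih =>
      rw [Function.iterate_succ]
      exact ih.comp hf hmaps

include hf hmaps in
lemma ordConn_image (n : ℕ) {S : Set ℝ} (hS : S.OrdConnected) (hSI : S ⊆ Icc 0 1) :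
    (f^[n] '' S).OrdConnected := by
  have h1 : IsPreconnected S := isPreconnected_iff_ordConnected.2 hS
  have h2 := h1.image (f^[n]) ((contIter hf hmaps n).mono hSI)
  exact isPreconnected_iff_ordConnected.1 h2

include hf hmaps in
lemma exactness (hmix : MixingOnI f) {S : Set ℝ} (hS : S.OrdConnected)
    (hSI : S ⊆ Icc 0 1) (hint : (interior S).Nonempty) {c d : ℝ} (hc : 0 < c) (hd : d < 1) :
    ∃ N, ∀ n ≥ N, Icc c d ⊆ f^[n] '' S := by
  rcases le_or_gt c d with hcd | hcd
  swap
  · exact ⟨0, fun n _ => by simp [Icc_eq_empty_of_lt hcd]⟩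
  obtain ⟨x, hx⟩ := hint
  obtain ⟨r, hr, hball⟩ := Metric.isOpen_iff.1 isOpen_interior x hx
  have hUS : Metric.ball x r ∩ Icc 0 1 ⊆ S := fun y hy => interior_subset (hball hy.1)
  have hUne : (Metric.ball x r ∩ Icc 0 1).Nonempty :=
    ⟨x, Metric.mem_ball_self hr, hSI (interior_subset hx)⟩
  have hc2 : c / 2 ∈ Iio c ∩ Icc (0:ℝ) 1 := by
    constructor
    · exact half_lt_self hc
    · constructor <;> [linarith; linarith]
  have hd2 : (d + 1) / 2 ∈ Ioi d ∩ Icc (0:ℝ) 1 := by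
    constructor
    · simp only [mem_Ioi]; linarith
    · constructor <;> [linarith; linarith]
  obtain ⟨N₁, hN₁⟩ := hmix (Metric.ball x r) (Iio c) Metric.isOpen_ball isOpen_Iio hUne ⟨_, hc2⟩
  obtain ⟨N₂, hN₂⟩ := hmix (Metric.ball x r) (Ioi d) Metric.isOpen_ball isOpen_Ioi hUne ⟨_, hd2⟩
  refine ⟨max N₁ N₂, fun n hn => ?_⟩
  obtain ⟨y₁, hy₁, hy₁'⟩ := hN₁ n (le_trans (le_max_left _ _) hn)
  obtain ⟨y₂, hy₂, hy₂'⟩ := hN₂ n (le_trans (le_max_right _ _) hn)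
  have hT : (f^[n] '' S).OrdConnected := ordConn_image hf hmaps n hS hSI
  have hy₁S : y₁ ∈ f^[n] '' S := image_mono hUS hy₁
  have hy₂S : y₂ ∈ f^[n] '' S := image_mono hUS hy₂
  exact subset_trans (Icc_subset_Icc (le_of_lt hy₁') (le_of_lt hy₂')) (hT.out hy₁S hy₂S)

include hf hmaps in
lemma invar (hmix : MixingOnI f) {S : Set ℝ} (hS : S.OrdConnected)
    (hSI : S ⊆ Icc 0 1) (hint : (interior S).Nonempty) (hinv : f '' S ⊆ S) :
    Ioo (0:ℝ) 1 ⊆ S := by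
  intro x hx
  obtain ⟨N, hN⟩ := exactness hf hmaps hmix hS hSI hint hx.1 hx.2
  have hxim : x ∈ f^[N] '' S := hN N le_rfl ⟨le_rfl, le_rfl⟩
  have hsub : ∀ n, f^[n] '' S ⊆ S := by
    intro n
    induction n with
    | zero => simp
    | succ n ih =>
        rw [Function.iterate_succ', Set.image_comp]
        exact (Set.image_mono (f := f) ih).trans hinv
  exact hsub N hxim

include hf hmaps in
lemma exists_fixed (hmix : MixingOnI f) :
    ∃ a ∈ Ioo (0:ℝ) 1, f a = a := by
  by_contra hcon
  push_neg at hcon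
  have h01 : (0:ℝ) ∈ Icc (0:ℝ) 1 := by constructor <;> norm_num
  have h11 : (1:ℝ) ∈ Icc (0:ℝ) 1 := by constructor <;> norm_num
  have hdich : (∀ x ∈ Ioo (0:ℝ) 1, x < f x) ∨ (∀ x ∈ Ioo (0:ℝ) 1, f x < x) := by
    by_contra h
    push_neg at h
    obtain ⟨⟨x₁, hx₁, h₁⟩, ⟨x₂, hx₂, h₂⟩⟩ := h
    have h₁' : f x₁ < x₁ := lt_of_le_of_ne h₁ (hcon _ hx₁)
    have h₂' : x₂ < f x₂ := lt_of_le_of_ne h₂ (fun h => hcon _ hx₂ h.symm)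
    set g : ℝ → ℝ := fun x => f x - x with hg
    rcases le_total x₁ x₂ with h12 | h12
    · have hsub : Icc x₁ x₂ ⊆ Icc (0:ℝ) 1 := fun z hz =>
        ⟨le_of_lt (lt_of_lt_of_le hx₁.1 hz.1), le_of_lt (lt_of_le_of_lt hz.2 hx₂.2)⟩
      have hgc : ContinuousOn g (Icc x₁ x₂) := ((hf.mono hsub).sub continuousOn_id)
      have : (0:ℝ) ∈ Icc (g x₁) (g x₂) := ⟨by simp [hg]; linarith, by simp [hg]; linarith⟩
      obtain ⟨c, hc, hc0⟩ := intermediate_value_Icc h12 hgc this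
      have : f c = c := by simp [hg] at hc0; linarith
      exact hcon c ⟨lt_of_lt_of_le hx₁.1 hc.1, lt_of_le_of_lt hc.2 hx₂.2⟩ this
    · have hsub : Icc x₂ x₁ ⊆ Icc (0:ℝ) 1 := fun z hz =>
        ⟨le_of_lt (lt_of_lt_of_le hx₂.1 hz.1), le_of_lt (lt_of_le_of_lt hz.2 hx₁.2)⟩
      have hgc : ContinuousOn g (Icc x₂ x₁) := ((hf.mono hsub).sub continuousOn_id)
      have : (0:ℝ) ∈ Icc (g x₁) (g x₂) := ⟨by simp [hg]; linarith, by simp [hg]; linarith⟩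
      obtain ⟨c, hc, hc0⟩ := intermediate_value_Icc' h12 hgc this
      have : f c = c := by simp [hg] at hc0; linarith
      exact hcon c ⟨lt_of_lt_of_le hx₂.1 hc.1, lt_of_le_of_lt hc.2 hx₁.2⟩ this
  rcases hdich with hP | hQ
  · -- f > id on (0,1); show f 1 = 1, then Icc (1/2) 1 invariant
    have hf1 : f 1 = 1 := by
      by_contra hne
      have hf1le : f 1 ≤ 1 := (hmaps h11).2
      have hf1lt : f 1 < 1 := lt_of_le_of_ne hf1le hne
      set t := (f 1 + 1) / 2 with ht
      have ht1 : t < 1 := by rw [ht]; linarith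
      have hft : f 1 < t := by rw [ht]; linarith
      have hne1 : (𝓝[Ioo (0:ℝ) 1] 1).NeBot := by
        rw [← mem_closure_iff_nhdsWithin_neBot, closure_Ioo (by norm_num : (0:ℝ) ≠ 1)]
        exact h11
      have htend : Tendsto f (𝓝[Ioo (0:ℝ) 1] 1) (𝓝 (f 1)) :=
        (hf 1 h11).mono_left (nhdsWithin_mono _ Ioo_subset_Icc_self)
      have h1 : ∀ᶠ x in 𝓝[Ioo (0:ℝ) 1] 1, f x < t := htend.eventually_lt_const hft
      have h2 : ∀ᶠ x in 𝓝[Ioo (0:ℝ) 1] 1, t < x :=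
        (eventually_gt_nhds ht1).filter_mono nhdsWithin_le_nhds
      have h3 : ∀ᶠ x in 𝓝[Ioo (0:ℝ) 1] 1, x ∈ Ioo (0:ℝ) 1 := eventually_mem_nhdsWithin
      obtain ⟨x, hxt, hxx, hxI⟩ := (h1.and (h2.and h3)).exists
      exact absurd (hP x hxI) (by linarith)
    have hinv2 : f '' Icc (1/2 : ℝ) 1 ⊆ Icc (1/2 : ℝ) 1 := by
      rintro _ ⟨y, hy, rfl⟩
      rcases eq_or_lt_of_le hy.2 with h | h
      · rw [h, hf1]; constructor <;> norm_num
      · have hyI : y ∈ Ioo (0:ℝ) 1 := ⟨by linarith [hy.1], h⟩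
        have := hP y hyI
        have hyle : f y ≤ 1 := (hmaps ⟨by linarith [hy.1], le_of_lt h⟩).2
        exact ⟨by linarith [hy.1], hyle⟩
    have hord : (Icc (1/2 : ℝ) 1).OrdConnected := ordConnected_Icc
    have hsubI : Icc (1/2 : ℝ) 1 ⊆ Icc (0:ℝ) 1 := Icc_subset_Icc (by norm_num) le_rfl
    have hint : (interior (Icc (1/2 : ℝ) 1)).Nonempty := by
      rw [interior_Icc]; exact ⟨3/4, by norm_num, by norm_num⟩
    have := invar hf hmaps hmix hord hsubI hint hinv2 (show (1/4 : ℝ) ∈ Ioo (0:ℝ) 1 by constructor <;> norm_num)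
    have := this.1
    norm_num at this
  · have hf0 : f 0 = 0 := by
      by_contra hne
      have hf0le : 0 ≤ f 0 := (hmaps h01).1
      have hf0lt : 0 < f 0 := lt_of_le_of_ne hf0le (fun h => hne h.symm)
      set t := f 0 / 2 with ht
      have ht1 : 0 < t := by rw [ht]; linarith
      have hft : t < f 0 := by rw [ht]; linarith
      have hne1 : (𝓝[Ioo (0:ℝ) 1] 0).NeBot := by
        rw [← mem_closure_iff_nhdsWithin_neBot, closure_Ioo (by norm_num : (0:ℝ) ≠ 1)]
        exact h01
      have htend : Tendsto f (𝓝[Ioo (0:ℝ) 1] 0) (𝓝 (f 0)) :=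
        (hf 0 h01).mono_left (nhdsWithin_mono _ Ioo_subset_Icc_self)
      have h1 : ∀ᶠ x in 𝓝[Ioo (0:ℝ) 1] 0, t < f x := htend.eventually_const_lt hft
      have h2 : ∀ᶠ x in 𝓝[Ioo (0:ℝ) 1] 0, x < t :=
        (eventually_lt_nhds ht1).filter_mono nhdsWithin_le_nhds
      have h3 : ∀ᶠ x in 𝓝[Ioo (0:ℝ) 1] 0, x ∈ Ioo (0:ℝ) 1 := eventually_mem_nhdsWithin
      obtain ⟨x, hxt, hxx, hxI⟩ := (h1.and (h2.and h3)).exists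
      exact absurd (hQ x hxI) (by linarith)
    have hinv2 : f '' Icc (0:ℝ) (1/2) ⊆ Icc (0:ℝ) (1/2) := by
      rintro _ ⟨y, hy, rfl⟩
      rcases eq_or_lt_of_le hy.1 with h | h
      · rw [← h, hf0]; constructor <;> norm_num
      · have hyI : y ∈ Ioo (0:ℝ) 1 := ⟨h, by linarith [hy.2]⟩
        have := hQ y hyI
        have hyge : 0 ≤ f y := (hmaps ⟨le_of_lt h, by linarith [hy.2]⟩).1
        exact ⟨hyge, by linarith [hy.2]⟩
    have hord : (Icc (0:ℝ) (1/2)).OrdConnected := ordConnected_Icc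
    have hsubI : Icc (0:ℝ) (1/2) ⊆ Icc (0:ℝ) 1 := Icc_subset_Icc le_rfl (by norm_num)
    have hint : (interior (Icc (0:ℝ) (1/2))).Nonempty := by
      rw [interior_Icc]; exact ⟨1/4, by norm_num, by norm_num⟩
    have := invar hf hmaps hmix hord hsubI hint hinv2 (show (3/4 : ℝ) ∈ Ioo (0:ℝ) 1 by constructor <;> norm_num)
    have := this.2
    norm_num at this
include hf in
lemma imageIcc {u v : ℝ} (huv : u ≤ v) (hsub : Icc u v ⊆ Icc (0:ℝ) 1) :
    f '' Icc u v = Icc (sInf (f '' Icc u v)) (sSup (f '' Icc u v)) :=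
  eq_Icc_of_connected_compact
    ⟨(nonempty_Icc.2 huv).image f, isPreconnected_Icc.image f (hf.mono hsub)⟩
    (isCompact_Icc.image_of_continuousOn (hf.mono hsub))

include hf hmaps in
lemma key (hmix : MixingOnI f) {a : ℝ} (ha : a ∈ Ioo (0:ℝ) 1) (hfa : f a = a)
    {η : ℝ} (hη : 0 < η) (hl : 0 < a - η) (hr : a + η < 1) :
    ∃ u v : ℝ, u ≤ a ∧ a ≤ v ∧ u < v ∧ a - η ≤ u ∧ v ≤ a + η ∧ Icc u v ⊆ f '' Icc u v := by
  have haI : a ∈ Icc (0:ℝ) 1 := ⟨le_of_lt ha.1, le_of_lt ha.2⟩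
  have hKI : Icc (a - η) (a + η) ⊆ Icc (0:ℝ) 1 := fun z hz =>
    ⟨by linarith [hz.1], by linarith [hz.2]⟩
  have hbddA : ∀ u v : ℝ, Icc u v ⊆ Icc (0:ℝ) 1 → BddAbove (f '' Icc u v) := fun u v h =>
    (isCompact_Icc.image_of_continuousOn (hf.mono h)).bddAbove
  have hbddB : ∀ u v : ℝ, Icc u v ⊆ Icc (0:ℝ) 1 → BddBelow (f '' Icc u v) := fun u v h =>
    (isCompact_Icc.image_of_continuousOn (hf.mono h)).bddBelow
  by_cases h1 : sSup (f '' Icc (a - η) (a + η)) ≤ a + η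
  · -- right side bounded: find fixed point of g
    set g : ℝ → ℝ := fun t => sSup (f '' Icc (a - η) t) with hg
    have hsubt : ∀ t, a ≤ t → t ≤ a + η → Icc (a - η) t ⊆ Icc (0:ℝ) 1 := fun t h1 h2 z hz =>
      ⟨by linarith [hz.1], by linarith [hz.2]⟩
    have hmono : ∀ s t, a ≤ s → s ≤ t → t ≤ a + η → g s ≤ g t := by
      intro s t hs hst ht
      exact csSup_le_csSup (hbddA _ _ (hsubt t (hs.trans hst) ht))
        ((nonempty_Icc.2 (by linarith)).image f)
        (image_mono (f := f) (Icc_subset_Icc le_rfl hst))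
    set B : Set ℝ := {t | t ∈ Icc a (a + η) ∧ t ≤ g t} with hB
    have haB : a ∈ B := by
      constructor
      · exact ⟨le_rfl, by linarith⟩
      · have : f a ∈ f '' Icc (a - η) a := mem_image_of_mem f ⟨by linarith, le_rfl⟩
        have := le_csSup (hbddA _ _ (hsubt a le_rfl (by linarith))) this
        rw [hfa] at this
        exact this
    have hBbdd : BddAbove B := ⟨a + η, fun t ht => ht.1.2⟩
    set t₀ := sSup B with ht₀
    have hat₀ : a ≤ t₀ := le_csSup hBbdd haB
    have ht₀η : t₀ ≤ a + η := csSup_le ⟨a, haB⟩ (fun t ht => ht.1.2)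
    have key1 : t₀ ≤ g t₀ := by
      apply csSup_le ⟨a, haB⟩
      intro t ht
      exact ht.2.trans (hmono t t₀ ht.1.1 (le_csSup hBbdd ht) ht₀η)
    have key2 : g t₀ ≤ t₀ := by
      by_contra hgt
      push_neg at hgt
      have hgη : g t₀ ≤ a + η := (hmono t₀ (a + η) hat₀ ht₀η le_rfl).trans h1
      have hmem : g t₀ ∈ B := by
        refine ⟨⟨hat₀.trans hgt.le, hgη⟩, ?_⟩
        exact hmono t₀ (g t₀) hat₀ hgt.le hgη
      exact absurd (le_csSup hBbdd hmem) (not_le.2 hgt)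
    have hgt₀ : g t₀ = t₀ := le_antisymm key2 key1
    set V := Icc (a - η) t₀ with hV
    have hVI : V ⊆ Icc (0:ℝ) 1 := hsubt t₀ hat₀ ht₀η
    have hVim : f '' V = Icc (sInf (f '' V)) (sSup (f '' V)) :=
      imageIcc hf (by linarith : a - η ≤ t₀) hVI
    have hsup : sSup (f '' V) = t₀ := hgt₀
    by_cases hm : sInf (f '' V) ≤ a - η
    · refine ⟨a - η, t₀, by linarith, hat₀, by linarith, le_rfl, ht₀η, ?_⟩
      rw [hVim, hsup]
      exact Icc_subset_Icc hm le_rfl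
    · exfalso
      push_neg at hm
      have hinv : f '' V ⊆ V := by
        rw [hVim, hsup]
        exact Icc_subset_Icc hm.le le_rfl
      have hint : (interior V).Nonempty := by
        rw [hV, interior_Icc]
        exact nonempty_Ioo.2 (by linarith)
      have := invar hf hmaps hmix ordConnected_Icc hVI hint hinv
        (show (a + η + 1) / 2 ∈ Ioo (0:ℝ) 1 by constructor <;> [linarith; linarith])
      have h2 := this.2
      linarith [ht₀η, h2]
  · push_neg at h1
    by_cases h2 : a - η ≤ sInf (f '' Icc (a - η) (a + η))
    · -- left side bounded
      set g : ℝ → ℝ := fun s => sInf (f '' Icc s (a + η)) with hg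
      have hsubt : ∀ s, a - η ≤ s → s ≤ a → Icc s (a + η) ⊆ Icc (0:ℝ) 1 := fun s h1 h2 z hz =>
        ⟨by linarith [hz.1], by linarith [hz.2]⟩
      have hmono : ∀ s t, a - η ≤ s → s ≤ t → t ≤ a → g s ≤ g t := by
        intro s t hs hst ht
        exact csInf_le_csInf (hbddB _ _ (hsubt s hs (hst.trans ht)))
          ((nonempty_Icc.2 (by linarith)).image f)
          (image_mono (f := f) (Icc_subset_Icc hst le_rfl))
      set B : Set ℝ := {s | s ∈ Icc (a - η) a ∧ g s ≤ s} with hB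
      have haB : a ∈ B := by
        refine ⟨⟨by linarith, le_rfl⟩, ?_⟩
        have : f a ∈ f '' Icc a (a + η) := mem_image_of_mem f ⟨le_rfl, by linarith⟩
        have := csInf_le (hbddB _ _ (hsubt a (by linarith) le_rfl)) this
        rw [hfa] at this
        exact this
      have hBbdd : BddBelow B := ⟨a - η, fun t ht => ht.1.1⟩
      set s₀ := sInf B with hs₀
      have has₀ : s₀ ≤ a := csInf_le hBbdd haB
      have hs₀η : a - η ≤ s₀ := le_csInf ⟨a, haB⟩ (fun t ht => ht.1.1)
      have key1 : g s₀ ≤ s₀ := by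
        apply le_csInf ⟨a, haB⟩
        intro t ht
        exact (hmono s₀ t hs₀η (csInf_le hBbdd ht) ht.1.2).trans ht.2
      have key2 : s₀ ≤ g s₀ := by
        by_contra hgt
        push_neg at hgt
        have hgη : a - η ≤ g s₀ := by
          have := hmono (a - η) s₀ le_rfl hs₀η has₀
          exact h2.trans this
        have hmem : g s₀ ∈ B := by
          refine ⟨⟨hgη, hgt.le.trans has₀⟩, ?_⟩
          exact hmono (g s₀) s₀ hgη hgt.le has₀
        exact absurd (csInf_le hBbdd hmem) (not_le.2 hgt)
      have hgs₀ : g s₀ = s₀ := le_antisymm key1 key2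
      set V := Icc s₀ (a + η) with hV
      have hVI : V ⊆ Icc (0:ℝ) 1 := hsubt s₀ hs₀η has₀
      have hVim : f '' V = Icc (sInf (f '' V)) (sSup (f '' V)) :=
        imageIcc hf (by linarith : s₀ ≤ a + η) hVI
      have hinf : sInf (f '' V) = s₀ := hgs₀
      by_cases hM : a + η ≤ sSup (f '' V)
      · refine ⟨s₀, a + η, has₀, by linarith, by linarith, hs₀η, le_rfl, ?_⟩
        rw [hVim, hinf]
        exact Icc_subset_Icc le_rfl hM
      · exfalso
        push_neg at hM
        have hinv : f '' V ⊆ V := by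
          rw [hVim, hinf]
          exact Icc_subset_Icc le_rfl hM.le
        have hint : (interior V).Nonempty := by
          rw [hV, interior_Icc]
          exact nonempty_Ioo.2 (by linarith)
        have := invar hf hmaps hmix ordConnected_Icc hVI hint hinv
          (show (a - η) / 2 ∈ Ioo (0:ℝ) 1 by constructor <;> [linarith; linarith])
        have h3 := this.1
        linarith [hs₀η, h3]
    · push_neg at h2
      refine ⟨a - η, a + η, by linarith, by linarith, by linarith, le_rfl, le_rfl, ?_⟩
      rw [imageIcc hf (by linarith : a - η ≤ a + η) hKI]
      exact Icc_subset_Icc h2.le h1.le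
include hf in
lemma close_infsup {ε : ℝ} (hε : 0 < ε) :
    ∃ δ > 0, ∀ u v u' v' : ℝ, u ≤ v → u' ≤ v' → Icc u v ⊆ Icc (0:ℝ) 1 →
      Icc u' v' ⊆ Icc (0:ℝ) 1 → |u - u'| ≤ δ → |v - v'| ≤ δ →
      |sInf (f '' Icc u v) - sInf (f '' Icc u' v')| ≤ ε ∧
      |sSup (f '' Icc u v) - sSup (f '' Icc u' v')| ≤ ε := by
  have huc := isCompact_Icc.uniformContinuousOn_of_continuous hf
  rw [Metric.uniformContinuousOn_iff] at huc
  obtain ⟨δ, hδ, hδ'⟩ := huc ε hε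
  have hclamp : ∀ u v u' v' w' : ℝ, u ≤ v → Icc u v ⊆ Icc (0:ℝ) 1 →
      Icc u' v' ⊆ Icc (0:ℝ) 1 → |u - u'| ≤ δ/2 → |v - v'| ≤ δ/2 → w' ∈ Icc u' v' →
      ∃ w ∈ Icc u v, dist (f w) (f w') < ε := by
    intro u v u' v' w' huv hs hs' h1 h2 hw'
    set w := max u (min w' v) with hw
    have hwmem : w ∈ Icc u v := ⟨le_max_left _ _, max_le huv (min_le_right _ _)⟩
    have hdist : dist w w' ≤ δ/2 := by
      rcases lt_or_ge w' u with hlt | hge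
      · have hww : w = u := by
          rw [hw, min_eq_left (hlt.le.trans huv), max_eq_left hlt.le]
        rw [hww, Real.dist_eq, abs_of_nonneg (by linarith)]
        have h3 : u - u' ≤ |u - u'| := le_abs_self _
        linarith [hw'.1]
      · rcases le_or_gt w' v with hle | hgt
        · have hww : w = w' := by rw [hw, min_eq_left hle, max_eq_right hge]
          rw [hww, dist_self]
          positivity
        · have hww : w = v := by rw [hw, min_eq_right hgt.le, max_eq_right huv]
          rw [hww, Real.dist_eq, abs_of_nonpos (by linarith)]
          have h3 : v' - v ≤ |v' - v| := le_abs_self _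
          rw [abs_sub_comm] at h3
          linarith [hw'.2]
    exact ⟨w, hwmem, hδ' w (hs hwmem) w' (hs' hw') (lt_of_le_of_lt hdist (by linarith))⟩
  refine ⟨δ/2, by positivity, ?_⟩
  have hinfle : ∀ u v u' v' : ℝ, u ≤ v → u' ≤ v' → Icc u v ⊆ Icc (0:ℝ) 1 →
      Icc u' v' ⊆ Icc (0:ℝ) 1 → |u - u'| ≤ δ/2 → |v - v'| ≤ δ/2 →
      sInf (f '' Icc u v) ≤ sInf (f '' Icc u' v') + ε := by
    intro u v u' v' huv hu'v' hs hs' h1 h2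
    obtain ⟨w', hw', hmin⟩ := isCompact_Icc.exists_isMinOn (nonempty_Icc.2 hu'v') (hf.mono hs')
    have hinf' : sInf (f '' Icc u' v') = f w' :=
      IsLeast.csInf_eq ⟨mem_image_of_mem f hw', by
        rintro _ ⟨x, hx, rfl⟩; exact isMinOn_iff.1 hmin x hx⟩
    obtain ⟨w, hwmem, hfd⟩ := hclamp u v u' v' w' huv hs hs' h1 h2 hw'
    have hle : sInf (f '' Icc u v) ≤ f w :=
      csInf_le (isCompact_Icc.image_of_continuousOn (hf.mono hs)).bddBelow
        (mem_image_of_mem f hwmem)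
    rw [Real.dist_eq] at hfd
    have := abs_lt.1 hfd
    rw [hinf']
    linarith [this.2]
  have hsuple : ∀ u v u' v' : ℝ, u ≤ v → u' ≤ v' → Icc u v ⊆ Icc (0:ℝ) 1 →
      Icc u' v' ⊆ Icc (0:ℝ) 1 → |u - u'| ≤ δ/2 → |v - v'| ≤ δ/2 →
      sSup (f '' Icc u' v') ≤ sSup (f '' Icc u v) + ε := by
    intro u v u' v' huv hu'v' hs hs' h1 h2
    obtain ⟨w', hw', hmax⟩ := isCompact_Icc.exists_isMaxOn (nonempty_Icc.2 hu'v') (hf.mono hs')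
    have hsup' : sSup (f '' Icc u' v') = f w' :=
      IsGreatest.csSup_eq ⟨mem_image_of_mem f hw', by
        rintro _ ⟨x, hx, rfl⟩; exact isMaxOn_iff.1 hmax x hx⟩
    obtain ⟨w, hwmem, hfd⟩ := hclamp u v u' v' w' huv hs hs' h1 h2 hw'
    have hle : f w ≤ sSup (f '' Icc u v) :=
      le_csSup (isCompact_Icc.image_of_continuousOn (hf.mono hs)).bddAbove
        (mem_image_of_mem f hwmem)
    rw [Real.dist_eq] at hfd
    have := abs_lt.1 hfd
    rw [hsup']
    linarith [this.1]
  intro u v u' v' huv hu'v' hs hs' h1 h2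
  have h1' : |u' - u| ≤ δ/2 := by rw [abs_sub_comm]; exact h1
  have h2' : |v' - v| ≤ δ/2 := by rw [abs_sub_comm]; exact h2
  constructor
  · exact abs_le.2 ⟨by linarith [hinfle u' v' u v hu'v' huv hs' hs h1' h2'],
      by linarith [hinfle u v u' v' huv hu'v' hs hs' h1 h2]⟩
  · exact abs_le.2 ⟨by linarith [hsuple u v u' v' huv hu'v' hs hs' h1 h2],
      by linarith [hsuple u' v' u v hu'v' huv hs' hs h1' h2']⟩
end AuxMix

theorem stmt_10 (f : ℝ → ℝ) (hf : ContinuousOn f (Icc 0 1))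
    (hmaps : MapsTo f (Icc 0 1) (Icc 0 1)) (hmix : MixingOnI f) :
    ∃ a ∈ Ioo (0:ℝ) 1, f a = a ∧
      ∃ U : ℤ → Set ℝ, (∀ i, (U i).OrdConnected ∧ U i ⊆ Icc 0 1) ∧
        (∀ i, U i ⊆ U (i + 1) ∧ U (i + 1) = f '' U i) ∧
        (⋂ i, U i) = {a} ∧
        (∀ V : Set ℝ, IsOpen V → (V ∩ Icc 0 1).Nonempty →
          ∃ n : ℕ, U 0 ⊆ f^[n] '' (V ∩ Icc 0 1)) ∧
        Ioo (0:ℝ) 1 ⊆ ⋃ i, U i := by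
  classical
  obtain ⟨a, haI, hfa⟩ := exists_fixed hf hmaps hmix
  refine ⟨a, haI, hfa, ?_⟩
  have hfix : ∀ t : ℕ, f^[t] a = a := fun t => Function.iterate_fixed hfa t
  have haIcc : a ∈ Icc (0:ℝ) 1 := ⟨haI.1.le, haI.2.le⟩
  have ha0 : 0 < a := haI.1
  have ha1 : a < 1 := haI.2
  set e := min a (1 - a) / 2 with he
  have he0 : 0 < e := by
    have := lt_min ha0 (by linarith : (0:ℝ) < 1 - a); rw [he]; linarith
  have hea : e < a := by
    have := min_le_left a (1 - a); rw [he]; linarith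
  have heb : a + e < 1 := by
    have := min_le_right a (1 - a); rw [he]; linarith
  -- small generating intervals around a
  have hVex : ∀ n : ℕ, ∃ u v : ℝ, u ≤ a ∧ a ≤ v ∧ u < v ∧
      a - e / (n + 2) ≤ u ∧ v ≤ a + e / (n + 2) ∧ Icc u v ⊆ f '' Icc u v := by
    intro n
    have hn2 : (1:ℝ) < (n:ℝ) + 2 := by
      have : (0:ℝ) ≤ (n:ℝ) := Nat.cast_nonneg n
      linarith
    have h1 : 0 < e / ((n:ℝ) + 2) := by positivity
    have hlt : e / ((n:ℝ) + 2) < e := div_lt_self he0 hn2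
    exact key hf hmaps hmix haI hfa h1 (by linarith) (by linarith)
  choose u v hu hv huv hul hvr hVcov using hVex
  have hVsubW : ∀ n, Icc (u n) (v n) ⊆ Icc (a - e) (a + e) := by
    intro n
    have hn2 : (1:ℝ) < (n:ℝ) + 2 := by
      have : (0:ℝ) ≤ (n:ℝ) := Nat.cast_nonneg n
      linarith
    have hlt : e / ((n:ℝ) + 2) < e := div_lt_self he0 hn2
    exact Icc_subset_Icc (by linarith [hul n]) (by linarith [hvr n])
  have hWsubI : Icc (a - e) (a + e) ⊆ Icc (0:ℝ) 1 := fun z hz =>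
    ⟨by linarith [hz.1], by linarith [hz.2]⟩
  have hVsubI : ∀ n, Icc (u n) (v n) ⊆ Icc (0:ℝ) 1 := fun n => (hVsubW n).trans hWsubI
  have haV : ∀ n, a ∈ Icc (u n) (v n) := fun n => ⟨hu n, hv n⟩
  -- covering times
  have hcov : ∀ n : ℕ, ∃ m : ℕ, Icc (a - e) (a + e) ⊆ f^[m] '' Icc (u n) (v n) := by
    intro n
    obtain ⟨N, hN⟩ := exactness hf hmaps hmix ordConnected_Icc (hVsubI n)
      (by rw [interior_Icc]; exact nonempty_Ioo.2 (huv n))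
      (by linarith : (0:ℝ) < a - e) (by linarith : a + e < 1)
    exact ⟨N, hN N le_rfl⟩
  set mh : ℕ → ℕ := fun n => Nat.find (hcov n) with hmh
  have hcov' : ∀ n, Icc (a - e) (a + e) ⊆ f^[mh n] '' Icc (u n) (v n) := fun n =>
    Nat.find_spec (hcov n)
  have hminm : ∀ n k, k < mh n → ¬(Icc (a - e) (a + e) ⊆ f^[k] '' Icc (u n) (v n)) :=
    fun n k hk => Nat.find_min (hcov n) hk
  -- growth of covering times
  have hsmall : ∀ n : ℕ, ∀ z ∈ Icc (u n) (v n), |z - a| ≤ e / (n + 2) := by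
    intro n z hz
    rw [abs_le]
    constructor
    · linarith [hz.1, hul n]
    · linarith [hz.2, hvr n]
  have hgrow : ∀ j : ℕ, ∀ᶠ n in atTop, j + 2 ≤ mh n := by
    have hQ : ∀ k : ℕ, ∀ᶠ n in atTop, k < mh n := by
      intro k
      induction k with
      | zero =>
          apply Eventually.of_forall
          intro n
          rcases Nat.eq_zero_or_pos (mh n) with h0 | h0
          · exfalso
            have hspec := hcov' n
            rw [h0] at hspec
            simp only [Function.iterate_zero, Set.image_id] at hspec
            have := (hspec ⟨le_rfl, by linarith⟩).1
            have hn2 : (1:ℝ) < (n:ℝ) + 2 := by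
              have : (0:ℝ) ≤ (n:ℝ) := Nat.cast_nonneg n
              linarith
            have hlt : e / ((n:ℝ) + 2) < e := div_lt_self he0 hn2
            linarith [hul n]
          · exact h0
      | succ k ih =>
          have huc := isCompact_Icc.uniformContinuousOn_of_continuous
            (contIter hf hmaps (k + 1))
          rw [Metric.uniformContinuousOn_iff] at huc
          obtain ⟨δ, hδ, hδ'⟩ := huc e he0
          have hev : ∀ᶠ n : ℕ in atTop, e / ((n:ℝ) + 2) < δ := by
            have htend : Tendsto (fun n : ℕ => e / ((n:ℝ) + 2)) atTop (𝓝 0) := by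
              apply Tendsto.div_atTop tendsto_const_nhds
              exact tendsto_atTop_add_const_right atTop 2 tendsto_natCast_atTop_atTop
            exact htend.eventually_lt_const hδ
          filter_upwards [ih, hev] with n hn1 hn2
          rcases eq_or_lt_of_le (Nat.succ_le_of_lt hn1) with heq | hlt
          · exfalso
            have hspec := hcov' n
            rw [← heq] at hspec
            obtain ⟨z, hz, hz'⟩ := hspec (⟨by linarith, le_rfl⟩ :
              a + e ∈ Icc (a - e) (a + e))
            have hzI : z ∈ Icc (0:ℝ) 1 := hVsubI n hz
            have hdist : dist z a < δ := by
              rw [Real.dist_eq]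
              exact lt_of_le_of_lt (hsmall n z hz) hn2
            have hcontra := hδ' z hzI a haIcc hdist
            rw [hfix (k + 1), hz', Real.dist_eq] at hcontra
            have : |a + e - a| = e := by
              rw [abs_of_nonneg (by linarith)]; ring
            rw [this] at hcontra
            exact lt_irrefl e hcontra
          · exact hlt
    intro j
    exact (hQ (j + 1)).mono (fun n h => by omega)
  -- the interval-valued backward strings
  set K : ℕ → ℕ → Set ℝ := fun n j => f^[mh n - j] '' Icc (u n) (v n) with hK
  have hKsubI : ∀ n j, K n j ⊆ Icc (0:ℝ) 1 := fun n j =>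
    (Set.image_mono (hVsubI n)).trans ((hmaps.iterate _).image_subset)
  have hKcomp : ∀ n j, IsCompact (K n j) := fun n j =>
    isCompact_Icc.image_of_continuousOn ((contIter hf hmaps _).mono (hVsubI n))
  have hKconn : ∀ n j, IsPreconnected (K n j) := fun n j =>
    isPreconnected_Icc.image _ ((contIter hf hmaps _).mono (hVsubI n))
  have haK : ∀ n j, a ∈ K n j := fun n j => ⟨a, haV n, hfix _⟩
  set x : ℕ → ℕ → ℝ := fun n j => sInf (K n j) with hx
  set y : ℕ → ℕ → ℝ := fun n j => sSup (K n j) with hy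
  have hKIcc : ∀ n j, K n j = Icc (x n j) (y n j) := fun n j =>
    eq_Icc_of_connected_compact ⟨⟨a, haK n j⟩, hKconn n j⟩ (hKcomp n j)
  have hxa : ∀ n j, x n j ≤ a ∧ a ≤ y n j := by
    intro n j
    have := haK n j
    rw [hKIcc n j] at this
    exact ⟨this.1, this.2⟩
  have hxy : ∀ n j, x n j ≤ y n j := fun n j => (hxa n j).1.trans (hxa n j).2
  have hxyI : ∀ n j, Icc (x n j) (y n j) ⊆ Icc (0:ℝ) 1 := by
    intro n j
    rw [← hKIcc n j]
    exact hKsubI n j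
  have hxI : ∀ n j, x n j ∈ Icc (0:ℝ) 1 := fun n j => hxyI n j ⟨le_rfl, hxy n j⟩
  have hyI : ∀ n j, y n j ∈ Icc (0:ℝ) 1 := fun n j => hxyI n j ⟨hxy n j, le_rfl⟩
  -- monotone in the exponent
  have hexp : ∀ n s t, s ≤ t → f^[s] '' Icc (u n) (v n) ⊆ f^[t] '' Icc (u n) (v n) := by
    intro n s t hst
    induction t with
    | zero =>
        have : s = 0 := Nat.le_zero.1 hst
        rw [this]
    | succ t ih =>
        rcases Nat.lt_or_ge s (t + 1) with h | h
        · have h1 : f^[t] '' Icc (u n) (v n) ⊆ f^[t + 1] '' Icc (u n) (v n) := by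
            rw [Function.iterate_succ, Set.image_comp]
            exact Set.image_mono (hVcov n)
          exact (ih (by omega)).trans h1
        · have : s = t + 1 := le_antisymm hst h
          rw [this]
  have hKmono : ∀ n j, K n (j + 1) ⊆ K n j := fun n j => hexp n _ _ (by omega)
  have hKstep : ∀ n j, j + 1 ≤ mh n → K n j = f '' K n (j + 1) := by
    intro n j hj
    have harith : mh n - j = (mh n - (j + 1)) + 1 := by omega
    show f^[mh n - j] '' Icc (u n) (v n) = f '' (f^[mh n - (j + 1)] '' Icc (u n) (v n))
    rw [harith, Function.iterate_succ', Set.image_comp]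
  -- ultrafilter limits
  set 𝒰 : Ultrafilter ℕ := Ultrafilter.of atTop with h𝒰def
  have h𝒰 : (𝒰 : Filter ℕ) ≤ atTop := Ultrafilter.of_le _
  have hSU : ∀ j : ℕ, ∀ᶠ n in (𝒰 : Filter ℕ), j + 2 ≤ mh n := fun j =>
    (hgrow j).filter_mono h𝒰
  have hlim : ∀ j : ℕ, ∃ P Q : ℝ, P ∈ Icc (0:ℝ) 1 ∧ Q ∈ Icc (0:ℝ) 1 ∧
      Tendsto (fun n => x n j) 𝒰 (𝓝 P) ∧ Tendsto (fun n => y n j) 𝒰 (𝓝 Q) := by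
    intro j
    obtain ⟨P, hPI, hP⟩ := isCompact_Icc.ultrafilter_le_nhds
      (𝒰.map (fun n => x n j))
      (by
        rw [Ultrafilter.coe_map, le_principal_iff, mem_map]
        exact Eventually.of_forall (fun n => hxI n j))
    obtain ⟨Q, hQI, hQ⟩ := isCompact_Icc.ultrafilter_le_nhds
      (𝒰.map (fun n => y n j))
      (by
        rw [Ultrafilter.coe_map, le_principal_iff, mem_map]
        exact Eventually.of_forall (fun n => hyI n j))
    rw [Ultrafilter.coe_map] at hP hQ
    exact ⟨P, Q, hPI, hQI, hP, hQ⟩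
  choose p q hpI hqI hp hq using hlim
  -- basic limit facts
  have hpa : ∀ j, p j ≤ a := fun j =>
    le_of_tendsto (hp j) (Eventually.of_forall fun n => (hxa n j).1)
  have hqa : ∀ j, a ≤ q j := fun j =>
    ge_of_tendsto (hq j) (Eventually.of_forall fun n => (hxa n j).2)
  have hpq : ∀ j, p j ≤ q j := fun j => (hpa j).trans (hqa j)
  have hLsubI : ∀ j, Icc (p j) (q j) ⊆ Icc (0:ℝ) 1 := fun j z hz =>
    ⟨(hpI j).1.trans hz.1, hz.2.trans (hqI j).2⟩
  have hpmono : ∀ j, p j ≤ p (j + 1) := by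
    intro j
    apply le_of_tendsto_of_tendsto' (hp j) (hp (j + 1))
    intro n
    apply csInf_le_csInf _ ⟨a, haK n (j + 1)⟩ (hKmono n j)
    exact (hKcomp n j).bddBelow
  have hqmono : ∀ j, q (j + 1) ≤ q j := by
    intro j
    apply le_of_tendsto_of_tendsto' (hq (j + 1)) (hq j)
    intro n
    apply csSup_le_csSup _ ⟨a, haK n (j + 1)⟩ (hKmono n j)
    exact (hKcomp n j).bddAbove
  have hpmono' : ∀ j k, j ≤ k → p j ≤ p k := fun j k hjk =>
    monotone_nat_of_le_succ hpmono hjk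
  have hqmono' : ∀ j k, j ≤ k → q k ≤ q j := fun j k hjk =>
    antitone_nat_of_succ_le hqmono hjk
  have hLmono : ∀ j k, j ≤ k → Icc (p k) (q k) ⊆ Icc (p j) (q j) := fun j k hjk =>
    Icc_subset_Icc (hpmono' j k hjk) (hqmono' j k hjk)
  -- the exact image step in the limit
  have hstep_lim : ∀ j, sInf (f '' Icc (p (j + 1)) (q (j + 1))) = p j ∧
      sSup (f '' Icc (p (j + 1)) (q (j + 1))) = q j := by
    intro j
    have htendInf : Tendsto (fun n => sInf (f '' Icc (x n (j + 1)) (y n (j + 1)))) 𝒰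
        (𝓝 (sInf (f '' Icc (p (j + 1)) (q (j + 1))))) := by
      rw [Metric.tendsto_nhds]
      intro ε hε
      obtain ⟨δ, hδ, hδ'⟩ := close_infsup hf (half_pos hε)
      have h1 := (Metric.tendsto_nhds.1 (hp (j + 1))) δ hδ
      have h2 := (Metric.tendsto_nhds.1 (hq (j + 1))) δ hδ
      filter_upwards [h1, h2] with n hn1 hn2
      have := (hδ' (x n (j + 1)) (y n (j + 1)) (p (j + 1)) (q (j + 1))
        (hxy n (j + 1)) (hpq (j + 1)) (hxyI n (j + 1)) (hLsubI (j + 1))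
        (by rw [Real.dist_eq] at hn1; exact hn1.le)
        (by rw [Real.dist_eq] at hn2; exact hn2.le)).1
      rw [Real.dist_eq]
      linarith [this, abs_nonneg (sInf (f '' Icc (x n (j+1)) (y n (j+1))) -
        sInf (f '' Icc (p (j+1)) (q (j+1))))]
    have htendSup : Tendsto (fun n => sSup (f '' Icc (x n (j + 1)) (y n (j + 1)))) 𝒰
        (𝓝 (sSup (f '' Icc (p (j + 1)) (q (j + 1))))) := by
      rw [Metric.tendsto_nhds]
      intro ε hε
      obtain ⟨δ, hδ, hδ'⟩ := close_infsup hf (half_pos hε)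
      have h1 := (Metric.tendsto_nhds.1 (hp (j + 1))) δ hδ
      have h2 := (Metric.tendsto_nhds.1 (hq (j + 1))) δ hδ
      filter_upwards [h1, h2] with n hn1 hn2
      have := (hδ' (x n (j + 1)) (y n (j + 1)) (p (j + 1)) (q (j + 1))
        (hxy n (j + 1)) (hpq (j + 1)) (hxyI n (j + 1)) (hLsubI (j + 1))
        (by rw [Real.dist_eq] at hn1; exact hn1.le)
        (by rw [Real.dist_eq] at hn2; exact hn2.le)).2
      rw [Real.dist_eq]
      linarith [this]
    have hxeq : ∀ᶠ n in (𝒰 : Filter ℕ),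
        sInf (f '' Icc (x n (j + 1)) (y n (j + 1))) = x n j := by
      filter_upwards [hSU j] with n hn
      have hst := hKstep n j (by omega)
      rw [hKIcc n (j + 1)] at hst
      show _ = sInf (K n j)
      rw [hst]
    have hyeq : ∀ᶠ n in (𝒰 : Filter ℕ),
        sSup (f '' Icc (x n (j + 1)) (y n (j + 1))) = y n j := by
      filter_upwards [hSU j] with n hn
      have hst := hKstep n j (by omega)
      rw [hKIcc n (j + 1)] at hst
      show _ = sSup (K n j)
      rw [hst]
    constructor
    · exact tendsto_nhds_unique ((tendsto_congr' hxeq).1 htendInf) (hp j)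
    · exact tendsto_nhds_unique ((tendsto_congr' hyeq).1 htendSup) (hq j)
  have hLstep : ∀ j, f '' Icc (p (j + 1)) (q (j + 1)) = Icc (p j) (q j) := by
    intro j
    rw [imageIcc hf (hpq (j + 1)) (hLsubI (j + 1)), (hstep_lim j).1,
      (hstep_lim j).2]
  -- L 0 contains the fixed window
  have hW0 : p 0 ≤ a - e ∧ a + e ≤ q 0 := by
    constructor
    · apply le_of_tendsto (hp 0)
      apply Eventually.of_forall
      intro n
      apply csInf_le (hKcomp n 0).bddBelow
      have : K n 0 = f^[mh n] '' Icc (u n) (v n) := by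
        show f^[mh n - 0] '' _ = _
        rw [Nat.sub_zero]
      rw [this]
      exact hcov' n ⟨le_rfl, by linarith⟩
    · apply ge_of_tendsto (hq 0)
      apply Eventually.of_forall
      intro n
      apply le_csSup (hKcomp n 0).bddAbove
      have : K n 0 = f^[mh n] '' Icc (u n) (v n) := by
        show f^[mh n - 0] '' _ = _
        rw [Nat.sub_zero]
      rw [this]
      exact hcov' n ⟨by linarith, le_rfl⟩
  -- L 1 misses some point of (0,1)
  have hz1 : ∃ z ∈ Ioo (0:ℝ) 1, z ∉ Icc (p 1) (q 1) := by
    have hnotW : ∀ n, 2 ≤ mh n → (a - e < x n 1 ∨ y n 1 < a + e) := by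
      intro n hn
      have hne := hminm n (mh n - 1) (by omega)
      by_contra hcon
      push_neg at hcon
      apply hne
      have : K n 1 = f^[mh n - 1] '' Icc (u n) (v n) := rfl
      rw [← this, hKIcc n 1]
      exact Icc_subset_Icc hcon.1 hcon.2
    have hset : {n | 2 ≤ mh n} ∈ 𝒰 := h𝒰 (by simpa using hgrow 0)
    have hun : {n | a - e < x n 1} ∪ {n | y n 1 < a + e} ∈ 𝒰 :=
      mem_of_superset hset (fun n hn => hnotW n hn)
    rcases Ultrafilter.union_mem_iff.1 hun with hl | hr
    · refine ⟨(a - e) / 2, ⟨by linarith, by linarith⟩, ?_⟩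
      have hp1 : a - e ≤ p 1 := by
        apply ge_of_tendsto (hp 1)
        filter_upwards [hl] with n hn
        exact hn.le
      intro hmem
      have := hmem.1
      linarith
    · refine ⟨(a + e + 1) / 2, ⟨by linarith, by linarith⟩, ?_⟩
      have hq1 : q 1 ≤ a + e := by
        apply le_of_tendsto (hq 1)
        filter_upwards [hr] with n hn
        exact hn.le
      intro hmem
      have := hmem.2
      linarith
  obtain ⟨z₁, hz₁I, hz₁L⟩ := hz1
  -- the core: any point in all L j equals a
  have hA : ∀ w, (∀ j : ℕ, w ∈ Icc (p j) (q j)) → w = a := by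
    intro w hw
    by_contra hwa
    set A : Set ℝ := ⋂ j : ℕ, Icc (p j) (q j) with hAdef
    have hwA : w ∈ A := mem_iInter.2 hw
    have haA : a ∈ A := mem_iInter.2 (fun j => ⟨hpa j, hqa j⟩)
    have hAord : A.OrdConnected := by
      constructor
      intro s hs t ht z hz
      exact mem_iInter.2 fun j =>
        (ordConnected_Icc.out (mem_iInter.1 hs j) (mem_iInter.1 ht j)) hz
    have hAsubI : A ⊆ Icc (0:ℝ) 1 := (iInter_subset _ 0).trans (hLsubI 0)
    have hAint : (interior A).Nonempty := by
      have hsub : Icc (min w a) (max w a) ⊆ A :=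
        hAord.out (by rcases le_total w a with h | h <;>
            simp [min_eq_left, min_eq_right, h, hwA, haA])
          (by rcases le_total w a with h | h <;>
            simp [max_eq_left, max_eq_right, h, hwA, haA])
      have hlt : min w a < max w a := by
        rcases lt_or_gt_of_ne hwa with h | h
        · rw [min_eq_left h.le, max_eq_right h.le]; exact h
        · rw [min_eq_right h.le, max_eq_left h.le]; exact h
      have : Ioo (min w a) (max w a) ⊆ interior A :=
        interior_maximal (Ioo_subset_Icc_self.trans hsub) isOpen_Ioo
      exact ⟨(min w a + max w a) / 2, this ⟨by linarith, by linarith⟩⟩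
    have hAinv : f '' A ⊆ A := by
      rintro _ ⟨w', hw', rfl⟩
      apply mem_iInter.2
      intro j
      rw [← hLstep j]
      exact mem_image_of_mem f (mem_iInter.1 hw' (j + 1))
    have := invar hf hmaps hmix hAord hAsubI hAint hAinv hz₁I
    exact hz₁L (mem_iInter.1 this 1)
  -- nondegeneracy of each L j
  have hLiter : ∀ j, f^[j] '' Icc (p j) (q j) = Icc (p 0) (q 0) := by
    intro j
    induction j with
    | zero => simp
    | succ j ih =>
        rw [Function.iterate_succ, Set.image_comp, hLstep j, ih]
  have hpltq : ∀ j, p j < q j := by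
    intro j
    rcases eq_or_lt_of_le (hpq j) with heq | hlt
    · exfalso
      have h1 := hLiter j
      rw [← heq, Set.Icc_self, Set.image_singleton] at h1
      have hae : a - e ∈ ({f^[j] (p j)} : Set ℝ) := by
        rw [h1]; exact ⟨hW0.1, by linarith [hW0.2]⟩
      have hbe : a + e ∈ ({f^[j] (p j)} : Set ℝ) := by
        rw [h1]; exact ⟨by linarith [hW0.1], hW0.2⟩
      rw [mem_singleton_iff] at hae hbe
      rw [← hae] at hbe
      linarith
    · exact hlt
  -- choose a level j₀ with L j₀ inside the window
  have hj1 : ∃ j : ℕ, a - e ≤ p j := by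
    by_contra hcon
    push_neg at hcon
    have : ∀ j : ℕ, a - e ∈ Icc (p j) (q j) := fun j => ⟨(hcon j).le, by linarith [hqa j]⟩
    have := hA (a - e) this
    linarith
  have hj2 : ∃ j : ℕ, q j ≤ a + e := by
    by_contra hcon
    push_neg at hcon
    have : ∀ j : ℕ, a + e ∈ Icc (p j) (q j) := fun j => ⟨by linarith [hpa j], (hcon j).le⟩
    have := hA (a + e) this
    linarith
  obtain ⟨j₁, hj₁⟩ := hj1
  obtain ⟨j₂, hj₂⟩ := hj2
  set j₀ := max j₁ j₂ with hj₀def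
  have hpj₀ : a - e ≤ p j₀ := hj₁.trans (hpmono' j₁ j₀ (le_max_left _ _))
  have hqj₀ : q j₀ ≤ a + e := (hqmono' j₂ j₀ (le_max_right _ _)).trans hj₂
  set J := j₀ + 1 with hJdef
  set L : ℕ → Set ℝ := fun j => Icc (p j) (q j) with hLdef
  have hLJsub : L J ⊆ Icc (a - e) (a + e) := fun z hz =>
    ⟨by linarith [hpj₀, hpmono' j₀ J (by omega), hz.1],
     by linarith [hqj₀, hqmono' j₀ J (by omega), hz.2]⟩
  have hLJI : L J ⊆ Icc (0:ℝ) 1 := hLsubI J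
  have haLJ : a ∈ L J := ⟨hpa J, hqa J⟩
  have hLJgrow : L J ⊆ f '' L J := by
    have h1 : f '' L J = L j₀ := hLstep j₀
    rw [h1]
    exact hLmono j₀ J (by omega)
  have hmonoIm : ∀ t : ℕ, f^[t] '' L J ⊆ f^[t + 1] '' L J := by
    intro t
    rw [Function.iterate_succ, Set.image_comp]
    exact Set.image_mono hLJgrow
  -- define U
  set U : ℤ → Set ℝ := fun i => if 0 ≤ i then f^[i.toNat] '' L J
    else L (J + (-i).toNat) with hUdef
  have hU0 : U 0 = L J := by
    show (if (0:ℤ) ≤ 0 then f^[(0:ℤ).toNat] '' L J else _) = L J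
    rw [if_pos le_rfl]
    simp
  have haU : ∀ i, a ∈ U i := by
    intro i
    simp only [hUdef]
    by_cases h : 0 ≤ i
    · rw [if_pos h]
      exact ⟨a, haLJ, hfix _⟩
    · rw [if_neg h]
      exact ⟨hpa _, hqa _⟩
  refine ⟨U, ?_, ?_, ?_, ?_, ?_⟩
  · -- ordconnected and in I
    intro i
    simp only [hUdef]
    by_cases h : 0 ≤ i
    · rw [if_pos h]
      exact ⟨ordConn_image hf hmaps _ ordConnected_Icc hLJI,
        (Set.image_mono hLJI).trans ((hmaps.iterate _).image_subset)⟩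
    · rw [if_neg h]
      exact ⟨ordConnected_Icc, hLsubI _⟩
  · -- the chain conditions
    intro i
    by_cases h : 0 ≤ i
    · have h1 : (0:ℤ) ≤ i + 1 := by omega
      have htn : (i + 1).toNat = i.toNat + 1 := by omega
      have hUi : U i = f^[i.toNat] '' L J := by simp only [hUdef]; exact if_pos h
      have hUi1 : U (i + 1) = f^[i.toNat + 1] '' L J := by
        simp only [hUdef, if_pos h1, htn]
      constructor
      · rw [hUi, hUi1]
        exact hmonoIm i.toNat
      · rw [hUi, hUi1, Function.iterate_succ', Set.image_comp]
    · have hUi : U i = L (J + (-i).toNat) := by simp only [hUdef]; exact if_neg h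
      by_cases h1 : i = -1
      · subst h1
        have hUi1 : U (-1 + 1) = L J := by norm_num; exact hU0
        have hL1 : U (-1) = L (J + 1) := by
          rw [hUi]
          norm_num
        constructor
        · rw [hUi1, hL1]
          exact hLmono J (J + 1) (by omega)
        · rw [hUi1, hL1]
          exact (hLstep J).symm
      · have h2 : ¬ (0:ℤ) ≤ i + 1 := by omega
        have hUi1 : U (i + 1) = L (J + (-(i + 1)).toNat) := by
          simp only [hUdef]; exact if_neg h2
        have harith : (-i).toNat = (-(i + 1)).toNat + 1 := by omega
        constructor
        · rw [hUi, hUi1, harith]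
          exact hLmono (J + (-(i+1)).toNat) (J + ((-(i+1)).toNat + 1)) (by omega)
        · rw [hUi, hUi1, harith]
          have : J + ((-(i + 1)).toNat + 1) = (J + (-(i + 1)).toNat) + 1 := by omega
          rw [this]
          exact (hLstep (J + (-(i + 1)).toNat)).symm
  · -- intersection is {a}
    apply Set.eq_singleton_iff_unique_mem.2
    refine ⟨mem_iInter.2 haU, ?_⟩
    intro w hw
    apply hA
    intro j
    rcases le_or_gt j J with hjJ | hjJ
    · have hwJ : w ∈ L J := by
        have := mem_iInter.1 hw 0
        rw [hU0] at this
        exact this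
      exact hLmono j J hjJ hwJ
    · have hi := mem_iInter.1 hw ((J:ℤ) - j)
      have h2 : ¬ (0:ℤ) ≤ (J:ℤ) - j := by omega
      have harith : J + (-(((J:ℤ)) - j)).toNat = j := by omega
      simp only [hUdef] at hi
      rw [if_neg h2, harith] at hi
      exact hi
  · -- covering from any open set
    intro V hV hVne
    obtain ⟨xv, hxvV, hxvI⟩ := hVne
    obtain ⟨r, hr, hball⟩ := Metric.isOpen_iff.1 hV xv hxvV
    set S : Set ℝ := Ioo (xv - r) (xv + r) ∩ Icc 0 1 with hSdef
    have hSsub : S ⊆ V ∩ Icc 0 1 := by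
      intro z hz
      refine ⟨hball ?_, hz.2⟩
      rw [Real.ball_eq_Ioo]
      exact hz.1
    have hSord : S.OrdConnected := Set.OrdConnected.inter ordConnected_Ioo ordConnected_Icc
    have hSsubI : S ⊆ Icc (0:ℝ) 1 := fun z hz => hz.2
    have hSint : (interior S).Nonempty := by
      set c₁ := max (xv - r) 0 with hc₁
      set c₂ := min (xv + r) 1 with hc₂
      have hcc : c₁ < c₂ := by
        apply max_lt
        · apply lt_min
          · linarith
          · linarith [hxvI.2]
        · apply lt_min
          · linarith [hxvI.1]
          · norm_num
      have hsub2 : Ioo c₁ c₂ ⊆ S := by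
        intro z hz
        have h1 := hz.1
        have h2 := hz.2
        refine ⟨⟨?_, ?_⟩, ?_, ?_⟩
        · exact lt_of_le_of_lt (le_max_left _ _) h1
        · exact lt_of_lt_of_le h2 (min_le_left _ _)
        · exact le_of_lt (lt_of_le_of_lt (le_max_right _ _) h1)
        · exact le_of_lt (lt_of_lt_of_le h2 (min_le_right _ _))
      have : Ioo c₁ c₂ ⊆ interior S := interior_maximal hsub2 isOpen_Ioo
      exact ⟨(c₁ + c₂) / 2, this ⟨by linarith, by linarith⟩⟩
    obtain ⟨N, hN⟩ := exactness hf hmaps hmix hSord hSsubI hSint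
      (by linarith : (0:ℝ) < a - e) (by linarith : a + e < 1)
    refine ⟨N, ?_⟩
    rw [hU0]
    intro z hz
    have h1 : z ∈ Icc (a - e) (a + e) := hLJsub hz
    have h2 := hN N le_rfl h1
    exact Set.image_mono hSsub h2
  · -- union covers (0,1)
    intro w hw
    obtain ⟨N, hN⟩ := exactness hf hmaps hmix ordConnected_Icc hLJI
      (by rw [interior_Icc]; exact nonempty_Ioo.2 (hpltq J)) hw.1 hw.2
    have hmem : w ∈ f^[N] '' L J := hN N le_rfl ⟨le_rfl, le_rfl⟩
    apply mem_iUnion.2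
    refine ⟨(N : ℤ), ?_⟩
    simp only [hUdef]
    rw [if_pos (by positivity : (0:ℤ) ≤ (N:ℤ))]
    simpa using hmem
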